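/- If the directed graph associated to σ is strongly connected, then 0 is a simple eigenvalue of A, and the kernel of the transpose A^T is one-dimensional. -/

import Mathlib

open Matrix Finset

section Aux

variable {N : ℕ}

lemma aux_mulVec_apply (σ A : Matrix (Fin N) (Fin N) ℝ)
    (hoff : ∀ i j, i ≠ j → A i j = σ i j)
    (hdiag : ∀ i, A i i = -∑ k ∈ Finset.univ.filter (fun k => k ≠ i), σ i k)
    (x : Fin N → ℝ) (i : Fin N) :
    A.mulVec x i = ∑ k ∈ Finset.univ.erase i, σ i k * (x k - x i) := by
  have h1 : A.mulVec x i = ∑ j, A i j * x j := rfl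
  rw [h1, ← Finset.sum_erase_add _ _ (Finset.mem_univ i), hdiag i,
    Finset.filter_ne' Finset.univ i]
  have h2 : ∑ j ∈ Finset.univ.erase i, A i j * x j
      = ∑ j ∈ Finset.univ.erase i, σ i j * x j :=
    Finset.sum_congr rfl fun j hj => by rw [hoff i j (Finset.ne_of_mem_erase hj).symm]
  rw [h2, neg_mul, ← sub_eq_add_neg, Finset.sum_mul, ← Finset.sum_sub_distrib]
  exact Finset.sum_congr rfl fun k _ => by ring

lemma aux_mulVecT_apply (σ A : Matrix (Fin N) (Fin N) ℝ)
    (hoff : ∀ i j, i ≠ j → A i j = σ i j)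
    (hdiag : ∀ i, A i i = -∑ k ∈ Finset.univ.filter (fun k => k ≠ i), σ i k)
    (x : Fin N → ℝ) (i : Fin N) :
    Aᵀ.mulVec x i = ∑ j ∈ Finset.univ.erase i, σ j i * x j
      - (∑ k ∈ Finset.univ.erase i, σ i k) * x i := by
  have h1 : Aᵀ.mulVec x i = ∑ j, A j i * x j := by
    simp [mulVec, dotProduct, transpose_apply]
  rw [h1, ← Finset.sum_erase_add _ _ (Finset.mem_univ i), hdiag i,
    Finset.filter_ne' Finset.univ i]
  have h2 : ∑ j ∈ Finset.univ.erase i, A j i * x j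
      = ∑ j ∈ Finset.univ.erase i, σ j i * x j :=
    Finset.sum_congr rfl fun j hj => by rw [hoff j i (Finset.ne_of_mem_erase hj)]
  rw [h2]
  ring

lemma aux_propagate (σ : Matrix (Fin N) (Fin N) ℝ)
    (hconn : ∀ i j : Fin N, i ≠ j → Relation.TransGen (fun a b => 0 < σ a b) i j)
    (P : Fin N → Prop) (hstep : ∀ a b, P a → 0 < σ a b → P b)
    {i0 : Fin N} (h0 : P i0) : ∀ j, P j := by
  have key : ∀ j, Relation.TransGen (fun a b => 0 < σ a b) i0 j → P j := by
    intro j h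
    induction h with
    | single hr => exact hstep _ _ h0 hr
    | tail _ hr ih => exact hstep _ _ ih hr
  intro j
  rcases eq_or_ne i0 j with rfl | hij
  · exact h0
  · exact key j (hconn _ _ hij)

lemma aux_ker_const (hN : 0 < N) (σ A : Matrix (Fin N) (Fin N) ℝ)
    (hσ : ∀ i j, i ≠ j → 0 ≤ σ i j)
    (hoff : ∀ i j, i ≠ j → A i j = σ i j)
    (hdiag : ∀ i, A i i = -∑ k ∈ Finset.univ.filter (fun k => k ≠ i), σ i k)
    (hconn : ∀ i j : Fin N, i ≠ j → Relation.TransGen (fun a b => 0 < σ a b) i j)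
    (x : Fin N → ℝ) (hx : A.mulVec x = 0) : ∀ i j, x i = x j := by
  haveI : Nonempty (Fin N) := ⟨⟨0, hN⟩⟩
  obtain ⟨i0, hi0⟩ := Finite.exists_max x
  have key : ∀ j, x j = x i0 := by
    refine aux_propagate σ hconn (fun j => x j = x i0) ?_ rfl
    intro a b ha hab
    rcases eq_or_ne b a with rfl | hba
    · exact ha
    have h0 := congrFun hx a
    rw [aux_mulVec_apply σ A hoff hdiag] at h0
    simp only [Pi.zero_apply] at h0
    have hterms := (Finset.sum_eq_zero_iff_of_nonpos ?_).mp h0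
    · have hb := hterms b (Finset.mem_erase.mpr ⟨hba, Finset.mem_univ b⟩)
      have := (mul_eq_zero.mp hb).resolve_left (ne_of_gt hab)
      have hxb : x b = x a := by linarith [sub_eq_zero.mp this]
      rw [hxb, ha]
    · intro k hk
      have hka : k ≠ a := Finset.ne_of_mem_erase hk
      have h1 : 0 ≤ σ a k := hσ a k hka.symm
      have h2 : x k - x a ≤ 0 := by
        have := hi0 k
        rw [← ha] at this
        linarith
      exact mul_nonpos_of_nonneg_of_nonpos h1 h2
  intro i j
  rw [key i, key j]

end Aux

theorem zero_simple_eigenvalue (N : ℕ) (hN : 0 < N) (σ A : Matrix (Fin N) (Fin N) ℝ)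
    (hσ : ∀ i j, i ≠ j → 0 ≤ σ i j)
    (hoff : ∀ i j, i ≠ j → A i j = σ i j)
    (hdiag : ∀ i, A i i = -∑ k ∈ Finset.univ.filter (fun k => k ≠ i), σ i k)
    (hconn : ∀ i j : Fin N, i ≠ j → Relation.TransGen (fun a b => 0 < σ a b) i j) :
    Polynomial.rootMultiplicity 0 A.charpoly = 1 ∧
    Module.finrank ℝ (LinearMap.ker (Matrix.mulVecLin Aᵀ)) = 1 := by
  haveI : Nonempty (Fin N) := ⟨⟨0, hN⟩⟩
  set i0 : Fin N := ⟨0, hN⟩ with hi0def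
  -- the all-ones vector
  set e : Fin N → ℝ := fun _ => (1 : ℝ) with he
  have he_ne : e ≠ 0 := fun h => one_ne_zero (congrFun h i0)
  have he_ker : A.mulVec e = 0 := by
    funext i
    rw [aux_mulVec_apply σ A hoff hdiag]
    simp [he]
  -- kernel of A is spanned by e
  have hker_span : LinearMap.ker A.mulVecLin = Submodule.span ℝ {e} := by
    apply le_antisymm
    · intro x hx
      have hx' : A.mulVec x = 0 := hx
      have hc := aux_ker_const hN σ A hσ hoff hdiag hconn x hx'
      rw [Submodule.mem_span_singleton]
      exact ⟨x i0, funext fun j => by simp [he, hc j i0]⟩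
    · rw [Submodule.span_le, Set.singleton_subset_iff]
      exact he_ker
  have hkerA : Module.finrank ℝ (LinearMap.ker A.mulVecLin) = 1 := by
    rw [hker_span]; exact finrank_span_singleton he_ne
  -- rank-nullity for A and Aᵀ
  have hfr : Module.finrank ℝ (Fin N → ℝ) = N := by simp
  have rnA := LinearMap.finrank_range_add_finrank_ker A.mulVecLin
  have rnAT := LinearMap.finrank_range_add_finrank_ker Aᵀ.mulVecLin
  rw [hfr] at rnA rnAT
  have hrkA : A.rank + 1 = N := by rw [Matrix.rank, ← hkerA]; exact rnA
  have hrkAT : Aᵀ.rank + Module.finrank ℝ (LinearMap.ker Aᵀ.mulVecLin) = N := rnAT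
  rw [Matrix.rank_transpose] at hrkAT
  have hkerAT : Module.finrank ℝ (LinearMap.ker Aᵀ.mulVecLin) = 1 := by omega
  refine ⟨?_, hkerAT⟩
  -- positive left null vector
  obtain ⟨w, hwker, hw0⟩ : ∃ w, w ∈ LinearMap.ker Aᵀ.mulVecLin ∧ w ≠ 0 := by
    rw [← Submodule.ne_bot_iff]
    intro h
    rw [h] at hkerAT
    simp at hkerAT
  have hwker' : Aᵀ.mulVec w = 0 := hwker
  set v : Fin N → ℝ := fun i => |w i| with hv
  have hvnonneg : ∀ i, 0 ≤ v i := fun i => abs_nonneg _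
  -- Aᵀ v is componentwise nonneg
  have hcompnn : ∀ i, 0 ≤ Aᵀ.mulVec v i := by
    intro i
    rw [aux_mulVecT_apply σ A hoff hdiag]
    have hw_i : ∑ j ∈ Finset.univ.erase i, σ j i * w j
        = (∑ k ∈ Finset.univ.erase i, σ i k) * w i := by
      have := congrFun hwker' i
      rw [aux_mulVecT_apply σ A hoff hdiag] at this
      simp only [Pi.zero_apply] at this
      linarith
    have h1 : (∑ k ∈ Finset.univ.erase i, σ i k) * v i
        = |(∑ k ∈ Finset.univ.erase i, σ i k) * w i| := by
      rw [abs_mul, hv]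
      congr 1
      rw [abs_of_nonneg]
      exact Finset.sum_nonneg fun k hk => hσ i k (Finset.ne_of_mem_erase hk).symm
    rw [h1, ← hw_i]
    have h2 : |∑ j ∈ Finset.univ.erase i, σ j i * w j|
        ≤ ∑ j ∈ Finset.univ.erase i, σ j i * v j := by
      refine (Finset.abs_sum_le_sum_abs _ _).trans_eq ?_
      apply Finset.sum_congr rfl
      intro j hj
      rw [abs_mul, abs_of_nonneg (hσ j i (Finset.ne_of_mem_erase hj))]
    linarith
  -- total sum of Aᵀ v is zero
  have hsum0 : ∑ i, Aᵀ.mulVec v i = 0 := by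
    have h1 : ∀ i, Aᵀ.mulVec v i = ∑ j, A j i * v j := fun i => by
      simp [mulVec, dotProduct, transpose_apply]
    simp_rw [h1]
    rw [Finset.sum_comm]
    apply Finset.sum_eq_zero
    intro j _
    rw [← Finset.sum_mul]
    have hrow : ∑ i, A j i = 0 := by
      rw [← Finset.sum_erase_add _ _ (Finset.mem_univ j), hdiag j,
        Finset.filter_ne' Finset.univ j]
      have : ∑ i ∈ Finset.univ.erase j, A j i = ∑ i ∈ Finset.univ.erase j, σ j i :=
        Finset.sum_congr rfl fun i hi => hoff j i (Finset.ne_of_mem_erase hi).symm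
      rw [this]; ring
    rw [hrow, zero_mul]
  have hvker : Aᵀ.mulVec v = 0 := by
    funext i
    exact (Finset.sum_eq_zero_iff_of_nonneg (fun i _ => hcompnn i)).mp hsum0 i (Finset.mem_univ i)
  -- v is strictly positive
  obtain ⟨j0, hj0⟩ : ∃ j0, w j0 ≠ 0 := by
    by_contra h
    push_neg at h
    exact hw0 (funext h)
  have hvpos : ∀ i, 0 < v i := by
    refine aux_propagate σ hconn (fun i => 0 < v i) ?_ (abs_pos.mpr hj0)
    intro a b ha hab
    rcases (hvnonneg b).lt_or_eq with h | h
    · exact h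
    exfalso
    have hba : b ≠ a := fun hba => by rw [hba] at h; exact ha.ne h
    have h0 := congrFun hvker b
    rw [aux_mulVecT_apply σ A hoff hdiag, ← h] at h0
    simp only [Pi.zero_apply] at h0
    have h0' : ∑ j ∈ Finset.univ.erase b, σ j b * v j = 0 := by linarith
    have hterm := (Finset.sum_eq_zero_iff_of_nonneg ?_).mp h0' a
      (Finset.mem_erase.mpr ⟨fun hab' => hba hab'.symm, Finset.mem_univ a⟩)
    · exact ha.ne' ((mul_eq_zero.mp hterm).resolve_left (ne_of_gt hab))
    · intro j hj
      exact mul_nonneg (hσ j b (Finset.ne_of_mem_erase hj)) (hvnonneg j)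
  have hvsum : 0 < ∑ i, v i :=
    Finset.sum_pos (fun i _ => hvpos i) ⟨i0, Finset.mem_univ i0⟩
  -- ker A² = ker A
  have hsq : ∀ x : Fin N → ℝ, A.mulVec (A.mulVec x) = 0 → A.mulVec x = 0 := by
    intro x hx
    have hc := aux_ker_const hN σ A hσ hoff hdiag hconn (A.mulVec x) hx
    have hdot : v ⬝ᵥ A.mulVec x = 0 := by
      rw [Matrix.dotProduct_mulVec, ← Matrix.mulVec_transpose, hvker]
      simp [dotProduct]
    have hdot' : (∑ i, v i) * A.mulVec x i0 = 0 := by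
      rw [← hdot, dotProduct, Finset.sum_mul]
      apply Finset.sum_congr rfl
      intro i _
      rw [hc i0 i]
    have hc0 : A.mulVec x i0 = 0 := by
      rcases mul_eq_zero.mp hdot' with h | h
      · exact absurd h hvsum.ne'
      · exact h
    funext i
    rw [hc i i0, hc0]
    rfl
  -- generalized eigenspace at 0 is ker
  set f : Module.End ℝ (Fin N → ℝ) := A.mulVecLin with hf
  have hker_pow : ∀ (k : ℕ) (x : Fin N → ℝ), (f ^ k) x = 0 → f x = 0 := by
    intro k
    induction k with
    | zero =>
      intro x hx
      simp only [pow_zero, Module.End.one_apply] at hx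
      rw [hx]; simp
    | succ k ih =>
      intro x hx
      rw [pow_succ, Module.End.mul_apply] at hx
      have := ih (f x) hx
      exact hsq x this
  have hmax : f.maxGenEigenspace 0 = LinearMap.ker f := by
    ext x
    rw [Module.End.mem_maxGenEigenspace]
    simp only [zero_smul, sub_zero]
    constructor
    · rintro ⟨k, hk⟩
      exact LinearMap.mem_ker.mpr (hker_pow k x hk)
    · intro hx
      exact ⟨1, by simpa using LinearMap.mem_ker.mp hx⟩
  have hmaxrank : Module.finrank ℝ (f.maxGenEigenspace 0) = 1 := by
    rw [hmax, hf, hkerA]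
  have hcp : f.charpoly = A.charpoly := by
    rw [← LinearMap.charpoly_toMatrix f (Pi.basisFun ℝ (Fin N)),
      LinearMap.toMatrix_eq_toMatrix']
    congr 1
    rw [hf, ← Matrix.toLin'_apply', LinearMap.toMatrix'_toLin']
  rw [Polynomial.rootMultiplicity_eq_natTrailingDegree', ← hcp,
    ← LinearMap.finrank_maxGenEigenspace_zero_eq, hmaxrank]
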